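/- arXiv:1408.5085 — 4 statements merged into one kernel-verified Lean document; each statement's English description precedes it below -/
import Mathlib

section
/- Let V be a finite-dimensional real vector space, let T_1, ..., T_n be linearly independent elements of the dual space V*, and let Q be a quadratic form on V whose restriction to the subspace ∩_{i=1}^n Ker T_i is not identically zero. If F(z_0, z_1, ..., z_n) is a real polynomial in n+1 variables such that the function V → ℝ given by v ↦ F(Q(v), T_1(v), ..., T_n(v)) is identically zero, then F is the zero polynomial. (In other words, Q, T_1, ..., T_n are algebraically independent.) -/
open Polynomial

/-- **Lemma 4.1 (algebraic independence).** Let `V` be a finite-dimensional real vector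
space, `T_1, …, T_n` linearly independent linear functionals on `V`, and `Q` a quadratic
form on `V` whose restriction to `⋂ ker T_i` is not identically zero. If a real polynomial
`F` in `n + 1` variables satisfies `F (Q v, T_1 v, …, T_n v) = 0` for all `v ∈ V`, then
`F` is the zero polynomial. -/
theorem algebraic_independence_of_functionals_and_quadratic_form
    {V : Type*} [AddCommGroup V] [Module ℝ V] [FiniteDimensional ℝ V]
    {n : ℕ} (T : Fin n → Module.Dual ℝ V) (hT : LinearIndependent ℝ T)
    (Q : QuadraticForm ℝ V)
    (hQ : ∃ v : V, (∀ i, T i v = 0) ∧ Q v ≠ 0)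
    (F : MvPolynomial (Fin (n + 1)) ℝ)
    (hF : ∀ v : V, MvPolynomial.eval (Fin.cons (Q v) fun i => T i v) F = 0) :
    F = 0 := by
  classical
  obtain ⟨v0, hv0T, hv0Q⟩ := hQ
  -- Step 1: the map `v ↦ (T i v)_i` is surjective onto `ℝⁿ`.
  have hsurj : Function.Surjective (LinearMap.pi T : V →ₗ[ℝ] (Fin n → ℝ)) := by
    by_contra h
    have hlt : LinearMap.range (LinearMap.pi T : V →ₗ[ℝ] (Fin n → ℝ)) < ⊤ :=
      lt_top_iff_ne_top.mpr fun ht => h (LinearMap.range_eq_top.mp ht)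
    obtain ⟨φ, φ0, hle⟩ :=
      (LinearMap.range (LinearMap.pi T : V →ₗ[ℝ] (Fin n → ℝ))).exists_le_ker_of_lt_top hlt
    set c : Fin n → ℝ := fun i => φ (fun j => if i = j then 1 else 0) with hc
    have hrep : ∀ x : Fin n → ℝ, φ x = ∑ i, x i * c i := by
      intro x
      simpa [smul_eq_mul, hc] using LinearMap.pi_apply_eq_sum_univ φ x
    have hzero : ∀ i, c i = 0 := by
      have hsum : ∑ i, c i • T i = 0 := by
        ext v
        have hker : φ (LinearMap.pi T v) = 0 := hle ⟨v, rfl⟩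
        rw [hrep] at hker
        simpa [LinearMap.pi_apply, mul_comm] using hker
      exact fun i => linearIndependent_iff'.mp hT Finset.univ c hsum i (Finset.mem_univ i)
    exact φ0 (LinearMap.ext fun x => by simp [hrep, hzero])
  -- Step 2: reduce to showing `F` evaluates to zero everywhere.
  apply MvPolynomial.funext
  intro x
  rw [map_zero]
  set t : Fin n → ℝ := fun i => x i.succ with htdef
  obtain ⟨w, hw⟩ := hsurj t
  have hwT : ∀ i, T i w = t i := fun i => congrFun hw i
  -- the one-variable polynomial `z ↦ F (z, t)`
  set p : Polynomial ℝ :=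
    MvPolynomial.aeval (Fin.cons Polynomial.X fun i => Polynomial.C (t i)) F with hp
  have hpeval : ∀ z : ℝ, p.eval z = MvPolynomial.eval (Fin.cons z t) F := by
    intro z
    rw [hp, MvPolynomial.aeval_def, ← Polynomial.coe_evalRingHom,
      MvPolynomial.eval₂_comp_left (Polynomial.evalRingHom z)]
    have hf : (Polynomial.evalRingHom z).comp (algebraMap ℝ (Polynomial ℝ))
        = RingHom.id ℝ := by ext r; simp
    rw [hf]
    show MvPolynomial.eval₂ _ _ F = MvPolynomial.eval₂ _ _ F
    apply MvPolynomial.eval₂_congr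
    intro i _ _
    refine Fin.cases ?_ (fun j => ?_) i <;> simp
  -- the quadratic polynomial `s ↦ Q (s • v0 + w)`
  set b : ℝ := QuadraticMap.polar Q v0 w with hb
  set q : Polynomial ℝ :=
    Polynomial.C (Q v0) * Polynomial.X ^ 2 + Polynomial.C b * Polynomial.X
      + Polynomial.C (Q w) with hq
  have hqeval : ∀ s : ℝ, q.eval s = Q (s • v0 + w) := by
    intro s
    have hadd : Q (s • v0 + w)
        = Q (s • v0) + Q w + QuadraticMap.polar (⇑Q) (s • v0) w := by
      simp [QuadraticMap.polar]
    rw [hadd, QuadraticMap.map_smul, QuadraticMap.polar_smul_left]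
    simp [hq, hb]
    ring
  have hcomp : p.comp q = 0 := by
    apply Polynomial.funext
    intro s
    rw [Polynomial.eval_comp, hqeval, hpeval, Polynomial.eval_zero]
    have hFe := hF (s • v0 + w)
    have ht' : (fun i => T i (s • v0 + w)) = t := by
      funext i
      simp [hv0T i, hwT i]
    rwa [ht'] at hFe
  have hqne : q ≠ Polynomial.C (q.coeff 0) := by
    intro hqc
    have h2 : q.coeff 2 = (Polynomial.C (q.coeff 0)).coeff 2 := by rw [← hqc]
    rw [Polynomial.coeff_C] at h2
    simp [hq, Polynomial.coeff_C] at h2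
    exact hv0Q h2
  have hp0 : p = 0 := by
    rcases Polynomial.comp_eq_zero_iff.mp hcomp with hp0 | ⟨_, hqc⟩
    · exact hp0
    · exact absurd hqc hqne
  have hx : MvPolynomial.eval x F = MvPolynomial.eval (Fin.cons (x 0) t) F := by
    rw [← Fin.cons_self_tail x]; rfl
  rw [hx, ← hpeval, hp0, Polynomial.eval_zero]
end

section
/- Let λ be an integer and p : ℤ → ℝ a function. If there exists a real polynomial P of degree at most n such that (∇^1_λ p)(x) = p(x) − p(x + λ) equals P(x) for every x ∈ ℤ, then there exists a real polynomial R of degree at most n + 1 such that p(λx) = R(x) for every x ∈ ℤ. -/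
open Polynomial

/-- Antidifference: every polynomial of degree ≤ m has an antidifference of degree ≤ m+1. -/
lemma exists_antidiff : ∀ (m : ℕ) (Q : Polynomial ℝ), Q.natDegree ≤ m →
    ∃ S : Polynomial ℝ, S.natDegree ≤ m + 1 ∧ ∀ x : ℝ, S.eval (x + 1) - S.eval x = Q.eval x := by
  intro m
  induction m with
  | zero =>
    intro Q hQ
    refine ⟨C (Q.coeff 0) * X, (natDegree_C_mul_le _ _).trans (by simp), ?_⟩
    intro x
    rw [Polynomial.eq_C_of_natDegree_le_zero hQ]
    simp
    ring
  | succ m ih =>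
    intro Q hQ
    set a := Q.coeff (m + 1) with ha
    set T : Polynomial ℝ := C (a / (m + 2)) * X ^ (m + 2) with hT
    set D : Polynomial ℝ := T.comp (X + 1) - T with hD
    have hTc : T.comp (X + 1) = C (a / (m + 2)) * (X + 1) ^ (m + 2) := by
      simp [hT]
    have hDcoeff : ∀ k : ℕ, D.coeff k =
        a / (m + 2) * ((m + 2).choose k) - (a / (m + 2)) * (X ^ (m + 2) : Polynomial ℝ).coeff k := by
      intro k
      rw [hD, Polynomial.coeff_sub, hTc, hT, Polynomial.coeff_C_mul, Polynomial.coeff_C_mul,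
        coeff_X_add_one_pow]
    have hQD : (Q - D).natDegree ≤ m := by
      rw [Polynomial.natDegree_le_iff_coeff_eq_zero]
      intro k hk
      rw [Polynomial.coeff_sub, hDcoeff k]
      rcases eq_or_lt_of_le (Nat.succ_le_of_lt hk) with hk1 | hk1
      · rw [← hk1]
        have h2 : ((m : ℝ) + 2) ≠ 0 := by positivity
        simp [← ha, Nat.choose_succ_self_right]
        field_simp
        ring
      · have hk2 : Q.coeff k = 0 := Polynomial.coeff_eq_zero_of_natDegree_lt (lt_of_le_of_lt hQ hk1)
        have hk4 : (((m + 2).choose k : ℝ)) = (X ^ (m + 2) : Polynomial ℝ).coeff k := by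
          rw [Polynomial.coeff_X_pow]
          rcases eq_or_lt_of_le (show m + 2 ≤ k by omega) with h' | h'
          · simp [h'.symm]
          · rw [Nat.choose_eq_zero_of_lt h', if_neg (by omega : ¬ k = m + 2)]
            simp
        rw [hk2, hk4]
        ring
    obtain ⟨S', hS'deg, hS'⟩ := ih (Q - D) hQD
    refine ⟨T + S', ?_, ?_⟩
    · refine (Polynomial.natDegree_add_le _ _).trans (max_le ?_ (by omega))
      calc T.natDegree ≤ (X ^ (m + 2) : Polynomial ℝ).natDegree := natDegree_C_mul_le _ _
        _ ≤ m + 2 := by simp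
    · intro x
      have := hS' x
      simp only [Polynomial.eval_sub, hD, Polynomial.eval_comp, Polynomial.eval_add,
        Polynomial.eval_X, Polynomial.eval_one] at this ⊢
      linarith

/-- The difference operator `(∇^1_λ p)(x) := p(x) − p(x + λ)` for `p : ℤ → ℝ`. -/
noncomputable def nablaOne (l : ℤ) (p : ℤ → ℝ) : ℤ → ℝ :=
  fun x => p x - p (x + l)

/-- **Lemma 4.4 (1).** If `∇^1_λ p` agrees on `ℤ` with a real polynomial of degree at
most `n`, then `x ↦ p(λ x)` agrees on `ℤ` with a real polynomial of degree at most
`n + 1`. -/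
theorem poly_of_nablaOne_poly (l : ℤ) (p : ℤ → ℝ) (n : ℕ)
    (h : ∃ P : Polynomial ℝ, P.natDegree ≤ n ∧ ∀ x : ℤ, nablaOne l p x = P.eval (x : ℝ)) :
    ∃ R : Polynomial ℝ, R.natDegree ≤ n + 1 ∧ ∀ x : ℤ, p (l * x) = R.eval (x : ℝ) := by
  obtain ⟨P, hPdeg, hP⟩ := h
  set Q : Polynomial ℝ := P.comp (C (l : ℝ) * X) with hQ
  have hQdeg : Q.natDegree ≤ n := by
    refine (Polynomial.natDegree_comp_le).trans ?_
    have : (C (l : ℝ) * X).natDegree ≤ 1 :=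
      (natDegree_C_mul_le _ _).trans (by simp)
    calc P.natDegree * (C (l : ℝ) * X).natDegree ≤ n * 1 := Nat.mul_le_mul hPdeg this
      _ = n := by ring
  obtain ⟨S, hSdeg, hS⟩ := exists_antidiff n Q hQdeg
  refine ⟨C (p 0 + S.eval 0) - S, ?_, ?_⟩
  · refine (Polynomial.natDegree_sub_le _ _).trans (max_le (by simp) hSdeg)
  · -- key recurrence: p (l*(x+1)) = p (l*x) - Q.eval x
    have key : ∀ x : ℤ, p (l * x) - p (l * (x + 1)) = Q.eval (x : ℝ) := by
      intro x
      have := hP (l * x)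
      simp only [nablaOne] at this
      rw [hQ]
      simp only [Polynomial.eval_comp, Polynomial.eval_mul, Polynomial.eval_C, Polynomial.eval_X]
      rw [show l * x + l = l * (x + 1) by ring] at this
      rw [this]
      push_cast
      ring
    intro x
    induction x using Int.induction_on with
    | zero => simp
    | succ k ihk =>
      have h1 := key k
      have h2 := hS (k : ℝ)
      push_cast at ihk h1 h2 ⊢
      simp only [Polynomial.eval_sub, Polynomial.eval_C] at ihk ⊢
      linarith
    | pred k ihk =>
      have h1 := key (-(k : ℤ) - 1)
      have h2 := hS ((-(k : ℤ) - 1 : ℤ) : ℝ)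
      push_cast at ihk h1 h2 ⊢
      simp only [Polynomial.eval_sub, Polynomial.eval_C] at ihk ⊢
      have e1 : l * (-(k : ℤ) - 1 + 1) = l * -(k : ℤ) := by ring
      rw [e1] at h1
      have e2 : ((-(k : ℝ) - 1) + 1) = -(k : ℝ) := by ring
      rw [e2] at h2
      linarith
end

section
/- Let V be a real vector space, A a finite index set, c : A → ℝ a function, and K_a ∈ V* a linear functional for each a ∈ A. Fix a natural number i and suppose that Σ_{a ∈ A} c(a) · (K_a(h))^i = 0 for every h ∈ V. Then for all natural numbers j, u with j + u = i and all h_1, h_2 ∈ V, Σ_{a ∈ A} c(a) · K_a(h_1)^j · K_a(h_2)^u = 0. -/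
open Polynomial in
lemma coeff_aux (x y : ℝ) (i j u : ℕ) (hju : j + u = i) :
    ((C x + C y * X) ^ i).coeff u = x ^ j * y ^ u * (i.choose j) := by
  rw [add_pow, finset_sum_coeff]
  have hterm : ∀ k, C x ^ k * (C y * X) ^ (i - k) * (i.choose k : Polynomial ℝ)
      = C (x ^ k * y ^ (i - k) * (i.choose k : ℝ)) * X ^ (i - k) := by
    intro k
    rw [mul_pow, ← C_pow, ← C_pow, ← Polynomial.C_eq_natCast, C_mul, C_mul]
    ring
  have : ∀ k ∈ Finset.range (i + 1),
      (C x ^ k * (C y * X) ^ (i - k) * (i.choose k : Polynomial ℝ)).coeff u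
      = if k = j then x ^ j * y ^ u * (i.choose j : ℝ) else 0 := by
    intro k hk
    rw [hterm, coeff_C_mul, coeff_X_pow]
    simp only [Finset.mem_range, Nat.lt_succ_iff] at hk
    by_cases h : k = j
    · subst h
      have : i - k = u := by omega
      rw [this]
      simp
    · have : ¬ u = i - k := by omega
      rw [if_neg this]
      simp [h]
  rw [Finset.sum_congr rfl this, Finset.sum_ite_eq' (Finset.range (i+1)) j]
  rw [if_pos (by simp; omega)]

/-- **Polarization of a vanishing sum of powers of linear functionals.** If
`Σ_{a ∈ A} c(a) (K_a h)^i = 0` for every `h ∈ V`, then for all `j + u = i` and all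
`h₁, h₂ ∈ V`, `Σ_{a ∈ A} c(a) (K_a h₁)^j (K_a h₂)^u = 0`. -/
theorem polarized_vanishing_of_power_sum
    {V : Type*} [AddCommGroup V] [Module ℝ V]
    {A : Type*} [Fintype A] (c : A → ℝ) (K : A → Module.Dual ℝ V) (i : ℕ)
    (hvan : ∀ h : V, ∑ a : A, c a * (K a h) ^ i = 0)
    (j u : ℕ) (hju : j + u = i) (h₁ h₂ : V) :
    ∑ a : A, c a * (K a h₁) ^ j * (K a h₂) ^ u = 0 := by
  classical
  set x : A → ℝ := fun a => K a h₁ with hx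
  set y : A → ℝ := fun a => K a h₂ with hy
  let p : Polynomial ℝ :=
    ∑ a : A, Polynomial.C (c a) * (Polynomial.C (x a) + Polynomial.C (y a) * Polynomial.X) ^ i
  have hp : p = 0 := by
    apply Polynomial.funext
    intro t
    have := hvan (h₁ + t • h₂)
    simp only [map_add, map_smul, smul_eq_mul] at this
    simp only [p, Polynomial.eval_finset_sum, Polynomial.eval_mul, Polynomial.eval_pow,
      Polynomial.eval_add, Polynomial.eval_C, Polynomial.eval_X, Polynomial.eval_zero]
    rw [← this]
    congr 1
    ext a
    rw [mul_comm (y a) t]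
  have hcoeff : p.coeff u = 0 := by rw [hp]; simp
  rw [Polynomial.finset_sum_coeff] at hcoeff
  simp only [Polynomial.coeff_C_mul, coeff_aux _ _ i j u hju] at hcoeff
  have hchoose : (i.choose j : ℝ) ≠ 0 := by
    exact_mod_cast (Nat.choose_pos (by omega : j ≤ i)).ne'
  have : (∑ a : A, c a * (x a ^ j * y a ^ u)) * (i.choose j : ℝ) = 0 := by
    rw [Finset.sum_mul, ← hcoeff]
    congr 1; ext a; ring
  rcases mul_eq_zero.mp this with h | h
  · rw [← h]; congr 1; ext a; ring
  · exact absurd h hchoose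
end

section
/- Let M be a free ℤ-module of finite rank with a symmetric ℤ-bilinear form Q : M × M → ℤ, extended ℝ-bilinearly to a pairing ⟨·,·⟩ : M × (M ⊗ ℝ) → ℝ. Let χ, c₁² ∈ ℤ and set c := χ − c₁². Let B ⊂ M be a finite subset with 0 ∉ B and −K ∈ B whenever K ∈ B, and let B' ⊆ B be a fundamental domain for negation (B is the disjoint union of B' and −B'). Let SW : B → ℤ satisfy SW(−K) = (−1)^χ SW(K) for all K ∈ B. Let w ∈ M be characteristic for Q (Q(x,x) ≡ Q(w,x) (mod 2) for all x ∈ M), with Q(w,w) ≡ c₁² (mod 2), and suppose Q(K,K) = c₁² for every K ∈ B (simple type). For K ∈ B define the integer ε(K) := (Q(w,w) + Q(w,K))/2. Assume the superconformal vanishing condition: for every natural number i ≤ c − 4 and every h ∈ M ⊗ ℝ, Σ_{K ∈ B} (−1)^{ε(K)} SW(K) ⟨K, h⟩^i = 0. Then for all natural numbers j, u with j + u < c − 3 and j + u ≡ c (mod 2), and all h_1, h_2 ∈ M ⊗ ℝ, Σ_{K ∈ B'} (−1)^{ε(K)} SW(K) ⟨K, h_1⟩^j ⟨K, h_2⟩^u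 = 0. -/
open TensorProduct

/-- **Lemma 5.1 (polarized superconformal vanishing).** Let `M` be a free ℤ-module of
finite rank with symmetric bilinear form `Q`, extended ℝ-bilinearly to a pairing
`pair : M → (ℝ ⊗[ℤ] M) →ₗ[ℝ] ℝ`. Let `B` be a finite set of `basic classes` with
`0 ∉ B`, closed under negation, with fundamental domain `B'` for negation, and let
`SW : M → ℤ` satisfy `SW(−K) = (−1)^χ SW(K)` on `B`. Let `w` be characteristic for `Q`
with `Q(w,w) ≡ c₁² (mod 2)` and `Q(K,K) = c₁²` for all `K ∈ B`, and set
`ε(K) = (Q(w,w) + Q(w,K))/2` and `c = χ − c₁²`. If the superconformal vanishing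
condition `Σ_{K ∈ B} (−1)^{ε(K)} SW(K) ⟨K,h⟩^i = 0` holds for all `i ≤ c − 4` and all
`h`, then for all `j + u < c − 3` with `j + u ≡ c (mod 2)` and all `h₁, h₂`,
`Σ_{K ∈ B'} (−1)^{ε(K)} SW(K) ⟨K,h₁⟩^j ⟨K,h₂⟩^u = 0`. -/
theorem superconformal_polarized_vanishing
    {M : Type*} [AddCommGroup M] [DecidableEq M] [Module.Free ℤ M] [Module.Finite ℤ M]
    (Q : M →ₗ[ℤ] M →ₗ[ℤ] ℤ) (hQsymm : ∀ x y : M, Q x y = Q y x)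
    (pair : M → (ℝ ⊗[ℤ] M) →ₗ[ℝ] ℝ)
    (hpair : ∀ x y : M, pair x ((1 : ℝ) ⊗ₜ[ℤ] y) = (Q x y : ℝ))
    (χ c₁sq : ℤ)
    (B B' : Finset M) (hB0 : (0 : M) ∉ B)
    (hBneg : ∀ K ∈ B, -K ∈ B)
    (hBunion : B = B' ∪ B'.image (fun K => -K))
    (hBdisj : Disjoint B' (B'.image (fun K => -K)))
    (SW : M → ℤ)
    (hSW : ∀ K ∈ B, (SW (-K) : ℝ) = (-1 : ℝ) ^ χ * (SW K : ℝ))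
    (w : M)
    (hwchar : ∀ x : M, Q x x ≡ Q w x [ZMOD 2])
    (hw2 : Q w w ≡ c₁sq [ZMOD 2])
    (hsimple : ∀ K ∈ B, Q K K = c₁sq)
    (hsuper : ∀ i : ℕ, (i : ℤ) ≤ (χ - c₁sq) - 4 → ∀ h : ℝ ⊗[ℤ] M,
      ∑ K ∈ B, (-1 : ℝ) ^ ((Q w w + Q w K) / 2) * (SW K : ℝ) * (pair K h) ^ i = 0)
    (j u : ℕ) (hju : (j : ℤ) + (u : ℤ) < (χ - c₁sq) - 3)
    (hparity : (j : ℤ) + (u : ℤ) ≡ (χ - c₁sq) [ZMOD 2])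
    (h₁ h₂ : ℝ ⊗[ℤ] M) :
    ∑ K ∈ B', (-1 : ℝ) ^ ((Q w w + Q w K) / 2) * (SW K : ℝ) *
      (pair K h₁) ^ j * (pair K h₂) ^ u = 0 := by
  classical
  -- abbreviations
  set x : M → ℝ := fun K => pair K h₁ with hx
  set y : M → ℝ := fun K => pair K h₂ with hy
  set a : M → ℝ := fun K => (-1 : ℝ) ^ ((Q w w + Q w K) / 2) * (SW K : ℝ) with ha
  set i : ℕ := j + u with hi
  have hile : (i : ℤ) ≤ (χ - c₁sq) - 4 := by simp only [hi]; push_cast; omega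
  -- sign helper
  have negpow : ∀ a b : ℤ, a % 2 = b % 2 → (-1:ℝ)^a = (-1:ℝ)^b := by
    intro a b h
    obtain ⟨k, hk⟩ : ∃ k, a = b + 2*k := ⟨(a-b)/2, by omega⟩
    subst hk
    rw [zpow_add₀ (by norm_num : (-1:ℝ) ≠ 0), zpow_mul]
    norm_num
  -- pair is odd in the first argument
  have pair_neg : ∀ (K : M) (h : ℝ ⊗[ℤ] M), pair (-K) h = - pair K h := by
    intro K h
    induction h using TensorProduct.induction_on with
    | zero => simp
    | tmul r m =>
        have hr : (r : ℝ) ⊗ₜ[ℤ] m = r • ((1:ℝ) ⊗ₜ[ℤ] m) := by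
          rw [TensorProduct.smul_tmul']; simp
        rw [hr, map_smul, map_smul, smul_eq_mul, smul_eq_mul, hpair, hpair,
          map_neg, LinearMap.neg_apply]
        push_cast; ring
    | add p q hp hq => rw [map_add, map_add, hp, hq]; ring
  -- evenness of Q w w + Q w K for K ∈ B
  have heven : ∀ K ∈ B, (Q w w + Q w K) % 2 = 0 := by
    intro K hK
    have h1 : Q K K ≡ Q w K [ZMOD 2] := hwchar K
    have h2 := hsimple K hK
    have h3 := hw2
    simp only [Int.ModEq] at h1 h3
    omega
  have hB'B : ∀ K ∈ B', K ∈ B := by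
    intro K hK; rw [hBunion]; exact Finset.mem_union_left _ hK
  -- term at -K equals term at K
  have hterm : ∀ K ∈ B, a (-K) * x (-K) ^ j * y (-K) ^ u = a K * x K ^ j * y K ^ u := by
    intro K hK
    have hxK : x (-K) = - x K := pair_neg K h₁
    have hyK : y (-K) = - y K := pair_neg K h₂
    have hQneg : Q w (-K) = - Q w K := by rw [map_neg]
    have hevK := heven K hK
    have hevnK : (Q w w + Q w (-K)) % 2 = 0 := by rw [hQneg]; omega
    have hsum : (Q w w + Q w (-K)) / 2 + ((j:ℤ) + u) + χ
        ≡ (Q w w + Q w K) / 2 [ZMOD 2] := by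
      simp only [Int.ModEq] at hparity hw2 ⊢
      rw [hQneg]
      omega
    have hsgn : (-1:ℝ) ^ ((Q w w + Q w (-K)) / 2) * (-1:ℝ)^((j:ℤ)+u) * (-1:ℝ)^χ
        = (-1:ℝ) ^ ((Q w w + Q w K) / 2) := by
      rw [← zpow_add₀ (by norm_num : (-1:ℝ) ≠ 0), ← zpow_add₀ (by norm_num : (-1:ℝ) ≠ 0)]
      exact negpow _ _ hsum
    have hSWK := hSW K hK
    simp only [ha, hxK, hyK]
    rw [hSWK]
    have hpow : (-1:ℝ)^((j:ℤ)+u) = (-1:ℝ)^j * (-1:ℝ)^u := by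
      rw [zpow_add₀ (by norm_num : (-1:ℝ) ≠ 0), zpow_natCast, zpow_natCast]
    calc (-1:ℝ) ^ ((Q w w + Q w (-K)) / 2) * ((-1:ℝ)^χ * (SW K : ℝ)) * (- x K) ^ j * (- y K) ^ u
        = ((-1:ℝ) ^ ((Q w w + Q w (-K)) / 2) * ((-1:ℝ)^j * (-1:ℝ)^u) * (-1:ℝ)^χ)
            * (SW K : ℝ) * x K ^ j * y K ^ u := by
          rw [neg_pow, neg_pow]; ring
      _ = (-1:ℝ) ^ ((Q w w + Q w K) / 2) * (SW K : ℝ) * x K ^ j * y K ^ u := by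
          rw [← hpow, hsgn]
  -- the full sum is twice the half sum
  have hsplit : ∑ K ∈ B, a K * x K ^ j * y K ^ u
      = 2 * ∑ K ∈ B', a K * x K ^ j * y K ^ u := by
    rw [hBunion, Finset.sum_union hBdisj,
      Finset.sum_image (fun p _ q _ h => neg_injective h)]
    have : ∑ K ∈ B', a (-K) * x (-K) ^ j * y (-K) ^ u
        = ∑ K ∈ B', a K * x K ^ j * y K ^ u :=
      Finset.sum_congr rfl fun K hK => hterm K (hB'B K hK)
    rw [this]; ring
  -- the polynomial identity
  have key : ∀ s : ℝ, ∑ K ∈ B, a K * (x K * s + y K) ^ i = 0 := by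
    intro s
    have h0 := hsuper i hile (s • h₁ + h₂)
    simp only [map_add, map_smul, smul_eq_mul] at h0
    rw [← h0]
    refine Finset.sum_congr rfl fun K _ => ?_
    simp only [ha, hx, hy]
    ring
  set P : Polynomial ℝ :=
    ∑ K ∈ B, Polynomial.C (a K) * (Polynomial.C (x K) * Polynomial.X + Polynomial.C (y K)) ^ i
    with hP
  have hPeval : ∀ s : ℝ, P.eval s = 0 := by
    intro s
    rw [hP, Polynomial.eval_finset_sum]
    simpa using key s
  have hP0 : P = 0 := Polynomial.funext (fun s => by rw [hPeval s, Polynomial.eval_zero])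
  have hcoeff : ∀ xx yy : ℝ,
      ((Polynomial.C xx * Polynomial.X + Polynomial.C yy) ^ i).coeff j
        = xx ^ j * yy ^ u * (i.choose j : ℝ) := by
    intro xx yy
    rw [add_pow, Polynomial.finset_sum_coeff]
    rw [Finset.sum_eq_single j]
    · rw [mul_pow, ← Polynomial.C_pow, ← Polynomial.C_pow]
      have : Polynomial.C (xx ^ j) * Polynomial.X ^ j * Polynomial.C (yy ^ (i - j))
          * (i.choose j : Polynomial ℝ)
          = Polynomial.C (xx ^ j * yy ^ (i - j) * (i.choose j : ℝ)) * Polynomial.X ^ j := by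
        rw [map_mul, map_mul, Polynomial.C_eq_natCast]
        ring
      rw [this, Polynomial.coeff_C_mul, Polynomial.coeff_X_pow, if_pos rfl]
      have hju' : i - j = u := by omega
      rw [hju']; ring
    · intro m _ hm
      rw [mul_pow, ← Polynomial.C_pow, ← Polynomial.C_pow]
      have : Polynomial.C (xx ^ m) * Polynomial.X ^ m * Polynomial.C (yy ^ (i - m))
          * (i.choose m : Polynomial ℝ)
          = Polynomial.C (xx ^ m * yy ^ (i - m) * (i.choose m : ℝ)) * Polynomial.X ^ m := by
        rw [map_mul, map_mul, Polynomial.C_eq_natCast]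
        ring
      rw [this, Polynomial.coeff_C_mul, Polynomial.coeff_X_pow, if_neg (by omega), mul_zero]
    · intro h
      exact absurd (Finset.mem_range.mpr (by omega)) h
  have hcj : P.coeff j = 0 := by rw [hP0, Polynomial.coeff_zero]
  rw [hP, Polynomial.finset_sum_coeff] at hcj
  simp only [Polynomial.coeff_C_mul, hcoeff] at hcj
  have hchoose : (i.choose j : ℝ) ≠ 0 := by
    exact_mod_cast (Nat.choose_pos (show j ≤ i by omega)).ne'
  have hBsum : ∑ K ∈ B, a K * x K ^ j * y K ^ u = 0 := by
    have : (∑ K ∈ B, a K * x K ^ j * y K ^ u) * (i.choose j : ℝ) = 0 := by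
      rw [← hcj, Finset.sum_mul]
      exact Finset.sum_congr rfl fun K _ => by ring
    exact (mul_eq_zero.mp this).resolve_right hchoose
  have : ∑ K ∈ B', a K * x K ^ j * y K ^ u = 0 := by
    rw [hsplit] at hBsum; linarith
  simpa only [ha, hx, hy] using this
end
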